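/- Let a < b be real numbers, z₁, …, z_k ∈ [a, b], and for each i let F_i : ℝ → [0, 1] be an increasing right-continuous function with F_i(s) = 0 for s < a and F_i(s) = 1 for s ≥ b. Then for every y ∈ ℝ, | Σ_{i=1}^k [ (y − z_i)_+ − ∫_a^y F_i(s) ds ] | ≤ (b − a) · sup_{u ∈ ℝ} | Σ_{i=1}^k [ 𝟙{z_i ≤ u} − F_i(u) ] |, where for y < a the integral ∫_a^y F_i(s) ds is interpreted as 0. -/

import Mathlib

open MeasureTheory intervalIntegral

private lemma ind_mono (z : ℝ) : Monotone (fun s => if z ≤ s then (1:ℝ) else 0) := by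
  intro s t hst
  dsimp only
  split_ifs with h1 h2
  · exact le_refl _
  · exact absurd (h1.trans hst) h2
  · norm_num
  · exact le_refl _

private lemma ind_int_zero (z c d : ℝ) (hcd : c ≤ d) (hd : d ≤ z) :
    ∫ s in c..d, (if z ≤ s then (1:ℝ) else 0) = 0 := by
  have hae : ∀ᵐ x : ℝ, x ∉ ({z} : Set ℝ) := by
    rw [← MeasureTheory.measure_eq_zero_iff_ae_notMem]
    exact Real.volume_singleton
  have : ∫ s in c..d, (if z ≤ s then (1:ℝ) else 0) = ∫ s in c..d, (0:ℝ) := by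
    apply intervalIntegral.integral_congr_ae
    filter_upwards [hae] with x hx hxI
    rw [Set.uIoc_of_le hcd] at hxI
    rw [if_neg]
    intro hzx
    simp only [Set.mem_singleton_iff] at hx
    exact hx (le_antisymm (hxI.2.trans hd) hzx)
  simp [this]

private lemma ind_integral (z a y : ℝ) (hz : a ≤ z) :
    ∫ s in a..y, (if z ≤ s then (1:ℝ) else 0) = max (y - z) 0 := by
  rcases le_or_gt y z with hyz | hzy
  · rw [max_eq_right (by linarith)]
    rcases le_total a y with hay | hya
    · exact ind_int_zero z a y hay hyz
    · rw [intervalIntegral.integral_symm, ind_int_zero z y a hya hz, neg_zero]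
  · have hint := fun (c d : ℝ) => (ind_mono z).intervalIntegrable (μ := volume) (a := c) (b := d)
    rw [← intervalIntegral.integral_add_adjacent_intervals (hint a z) (hint z y),
      ind_int_zero z a z hz le_rfl, zero_add, max_eq_left (by linarith)]
    have : ∫ s in z..y, (if z ≤ s then (1:ℝ) else 0) = ∫ s in z..y, (1:ℝ) := by
      apply intervalIntegral.integral_congr
      intro x hx
      rw [Set.uIcc_of_le hzy.le] at hx
      simp [hx.1]
    rw [this]
    simp

/-- Pathwise reduction of the empirical stop-loss process to the empirical CDF process:
if `z 1, …, z k ∈ [a, b]` and each `F i` is an increasing right-continuous function with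
`F i s = 0` for `s < a` and `F i s = 1` for `s ≥ b`, taking values in `[0,1]`, then for every `y`,
`|Σ_i [(y - z i)₊ - ∫_a^y F i]| ≤ (b - a) · sup_u |Σ_i [𝟙{z i ≤ u} - F i u]|`. -/
theorem stop_loss_ecdf_reduction
    (k : ℕ) (a b : ℝ) (hab : a < b)
    (z : Fin k → ℝ) (hz : ∀ i, z i ∈ Set.Icc a b)
    (F : Fin k → ℝ → ℝ)
    (hF_mono : ∀ i, Monotone (F i))
    (hF_rc : ∀ i u, ContinuousWithinAt (F i) (Set.Ici u) u)
    (hF_range : ∀ i s, F i s ∈ Set.Icc (0 : ℝ) 1)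
    (hF_lo : ∀ i s, s < a → F i s = 0)
    (hF_hi : ∀ i s, b ≤ s → F i s = 1) :
    ∀ y : ℝ,
      |∑ i, (max (y - z i) 0 - ∫ s in a..y, F i s)|
        ≤ (b - a) * ⨆ u : ℝ, |∑ i, ((if z i ≤ u then (1 : ℝ) else 0) - F i u)| := by
  intro y
  set g : ℝ → ℝ := fun s => ∑ i, ((if z i ≤ s then (1:ℝ) else 0) - F i s) with hg
  set M : ℝ := ⨆ u : ℝ, |g u| with hM
  -- integrability
  have hInti : ∀ (i : Fin k) (c d : ℝ),
      IntervalIntegrable (fun s => (if z i ≤ s then (1:ℝ) else 0) - F i s) volume c d :=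
    fun i c d => ((ind_mono (z i)).intervalIntegrable).sub ((hF_mono i).intervalIntegrable)
  have hIntg : ∀ c d : ℝ, IntervalIntegrable g volume c d := by
    intro c d
    have h1 := IntervalIntegrable.sum (μ := volume) (a := c) (b := d) Finset.univ
      (f := fun i s => (if z i ≤ s then (1:ℝ) else 0) - F i s) (fun i _ => hInti i c d)
    have h2 : g = ∑ i : Fin k, fun s => (if z i ≤ s then (1:ℝ) else 0) - F i s := by
      funext s
      simp [hg, Finset.sum_apply]
    rw [h2]
    exact h1
  -- key identity
  have key : ∑ i, (max (y - z i) 0 - ∫ s in a..y, F i s) = ∫ s in a..y, g s := by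
    rw [hg]
    rw [intervalIntegral.integral_finset_sum (fun i _ => hInti i a y)]
    apply Finset.sum_congr rfl
    intro i _
    rw [intervalIntegral.integral_sub ((ind_mono (z i)).intervalIntegrable)
      ((hF_mono i).intervalIntegrable), ind_integral (z i) a y (hz i).1]
  -- sup bounds
  have hbdd : BddAbove (Set.range fun u => |g u|) := by
    refine ⟨k, ?_⟩
    rintro _ ⟨u, rfl⟩
    calc |g u| ≤ ∑ i : Fin k, |(if z i ≤ u then (1:ℝ) else 0) - F i u| :=
          Finset.abs_sum_le_sum_abs _ _
      _ ≤ ∑ _i : Fin k, (1:ℝ) := by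
          apply Finset.sum_le_sum
          intro i _
          have h1 : (0:ℝ) ≤ F i u := (hF_range i u).1
          have h2 : F i u ≤ 1 := (hF_range i u).2
          rw [abs_sub_le_iff]
          constructor <;> split_ifs <;> norm_num <;> linarith
      _ = k := by simp
  have hle : ∀ u, |g u| ≤ M := fun u => le_ciSup hbdd u
  have hM0 : 0 ≤ M := le_trans (abs_nonneg _) (hle 0)
  -- vanishing outside [a, b]
  have hglo : ∀ s, s < a → g s = 0 := by
    intro s hs
    rw [hg]
    apply Finset.sum_eq_zero
    intro i _
    rw [hF_lo i s hs, if_neg (by linarith [(hz i).1])]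
    ring
  have hghi : ∀ s, b ≤ s → g s = 0 := by
    intro s hs
    rw [hg]
    apply Finset.sum_eq_zero
    intro i _
    rw [hF_hi i s hs, if_pos ((hz i).2.trans hs)]
    ring
  rw [key]
  -- case analysis on y
  rcases lt_or_ge y a with hya | hay
  · -- integral is zero
    have hae : ∀ᵐ x : ℝ, x ∉ ({a} : Set ℝ) := by
      rw [← MeasureTheory.measure_eq_zero_iff_ae_notMem]
      exact Real.volume_singleton
    have h0 : ∫ s in a..y, g s = ∫ s in a..y, (0:ℝ) := by
      apply intervalIntegral.integral_congr_ae
      filter_upwards [hae] with x hx hxI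
      rw [Set.uIoc_of_ge hya.le] at hxI
      simp only [Set.mem_singleton_iff] at hx
      exact hglo x (lt_of_le_of_ne hxI.2 hx)
    rw [h0]
    simp only [intervalIntegral.integral_zero, abs_zero]
    exact mul_nonneg (by linarith) hM0
  rcases le_or_gt y b with hyb | hby
  · -- a ≤ y ≤ b
    have := intervalIntegral.norm_integral_le_of_norm_le_const
      (a := a) (b := y) (C := M) (f := g) (fun x _ => hle x)
    rw [Real.norm_eq_abs] at this
    calc |∫ s in a..y, g s| ≤ M * |y - a| := this
      _ ≤ M * (b - a) := by
          apply mul_le_mul_of_nonneg_left _ hM0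
          rw [abs_of_nonneg (by linarith)]
          linarith
      _ = (b - a) * M := mul_comm _ _
  · -- y > b
    rw [← intervalIntegral.integral_add_adjacent_intervals (hIntg a b) (hIntg b y)]
    have h0 : ∫ s in b..y, g s = 0 := by
      have : ∫ s in b..y, g s = ∫ s in b..y, (0:ℝ) := by
        apply intervalIntegral.integral_congr
        intro x hx
        rw [Set.uIcc_of_le hby.le] at hx
        exact hghi x hx.1
      simp [this]
    rw [h0, add_zero]
    have := intervalIntegral.norm_integral_le_of_norm_le_const
      (a := a) (b := b) (C := M) (f := g) (fun x _ => hle x)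
    rw [Real.norm_eq_abs] at this
    calc |∫ s in a..b, g s| ≤ M * |b - a| := this
      _ = (b - a) * M := by rw [abs_of_nonneg (by linarith), mul_comm]
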